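/- Let 𝓑 be a primal feasible basis (B invertible and B⁻¹b ≥ 0) and suppose there exists w in the interior of C⁺ with Z_N w ≥ 0 (componentwise). Then the vector x ∈ ℝ^n formed by the first n components of the basic solution of 𝓑 belongs to X, is an optimal solution of (P1(w)), and is a maximizer of (P). -/

import Mathlib

open Matrix Pointwise

/-- A primal feasible basis whose reduced cost matrix satisfies Z_N w ≥ 0 for some
w in the interior of C⁺ yields a basic solution whose first n components lie in X,
solve (P1(w)) optimally, and form a maximizer of (P). -/
theorem basic_solution_of_optimal_dictionary_is_maximizer
    (n m q : ℕ) (hn : 0 < n) (hm : 0 < m) (hq : 0 < q)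
    (P : Matrix (Fin n) (Fin q) ℝ) (A : Matrix (Fin m) (Fin n) ℝ) (b : Fin m → ℝ)
    (C : Set (Fin q → ℝ))
    (hC0 : {(0 : Fin q → ℝ)} ⊂ C) (hCuniv : C ≠ Set.univ)
    (hCpoly : ∃ (k : ℕ) (Y : Fin k → Fin q → ℝ),
      C = {v | ∃ μ : Fin k → ℝ, (∀ i, 0 ≤ μ i) ∧ v = ∑ i, μ i • Y i})
    (hCpointed : ∀ v ∈ C, -v ∈ C → v = 0)
    (hCsolid : (interior C).Nonempty)
    (X : Set (Fin n → ℝ)) (hX : X = {x | A.mulVec x ≤ b ∧ 0 ≤ x})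
    -- the basis 𝓑 (columns β of [A I]) and the nonbasic columns ν
    (β : Fin m → Fin n ⊕ Fin m) (ν : Fin n → Fin n ⊕ Fin m)
    (hβν : Function.Bijective (Sum.elim β ν))
    (B : Matrix (Fin m) (Fin m) ℝ)
    (hB : B = (Matrix.fromCols A (1 : Matrix (Fin m) (Fin m) ℝ)).submatrix id β)
    (N : Matrix (Fin m) (Fin n) ℝ)
    (hN : N = (Matrix.fromCols A (1 : Matrix (Fin m) (Fin m) ℝ)).submatrix id ν)
    (PB : Matrix (Fin m) (Fin q) ℝ)
    (hPB : PB = (Matrix.fromRows P (0 : Matrix (Fin m) (Fin q) ℝ)).submatrix β id)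
    (PN : Matrix (Fin n) (Fin q) ℝ)
    (hPN : PN = (Matrix.fromRows P (0 : Matrix (Fin m) (Fin q) ℝ)).submatrix ν id)
    (ZN : Matrix (Fin n) (Fin q) ℝ)
    (hZN : ZN = (B⁻¹ * N).transpose * PB - PN)
    (hBunit : IsUnit B)
    (hfeas : 0 ≤ B⁻¹.mulVec b)
    (w : Fin q → ℝ)
    (hw : w ∈ interior {z : Fin q → ℝ | ∀ v ∈ C, 0 ≤ z ⬝ᵥ v})
    (hZw : 0 ≤ ZN.mulVec w)
    -- the basic solution x' and its first n components x
    (x' : Fin n ⊕ Fin m → ℝ)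
    (hx'B : ∀ k, x' (β k) = B⁻¹.mulVec b k)
    (hx'N : ∀ j, x' (ν j) = 0)
    (x : Fin n → ℝ) (hx : x = fun i => x' (Sum.inl i)) :
    x ∈ X ∧
    (∀ z ∈ X, w ⬝ᵥ P.transpose.mulVec z ≤ w ⬝ᵥ P.transpose.mulVec x) ∧
    ({P.transpose.mulVec x} + (C \ {0})) ∩ (P.transpose.mulVec '' X) = ∅ := by
  have hBdet : IsUnit B.det := (Matrix.isUnit_iff_isUnit_det B).mp hBunit
  set M : Matrix (Fin m) (Fin n ⊕ Fin m) ℝ :=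
    Matrix.fromCols A (1 : Matrix (Fin m) (Fin m) ℝ) with hM
  set S : Matrix (Fin n ⊕ Fin m) (Fin q) ℝ :=
    Matrix.fromRows P (0 : Matrix (Fin m) (Fin q) ℝ) with hS
  -- splitting sums over the index bijection
  have hsum : ∀ g : (Fin n ⊕ Fin m) → ℝ,
      ∑ j, g j = (∑ k, g (β k)) + ∑ j, g (ν j) := by
    intro g
    rw [← Fintype.sum_bijective _ hβν (fun i => g (Sum.elim β ν i)) g (fun i => rfl),
      Fintype.sum_sum_type]
    simp
  -- mulVec splits over basic/nonbasic columns
  have hMsplit : ∀ v : Fin n ⊕ Fin m → ℝ,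
      M.mulVec v = B.mulVec (v ∘ β) + N.mulVec (v ∘ ν) := by
    intro v
    funext i
    have := hsum (fun j => M i j * v j)
    simpa [Matrix.mulVec, dotProduct, hB, hN, Matrix.submatrix] using this
  -- mulVec splits over inl/inr
  have hMlr : ∀ v : Fin n ⊕ Fin m → ℝ,
      M.mulVec v = A.mulVec (v ∘ Sum.inl) + (v ∘ Sum.inr) := by
    intro v
    have hv : Sum.elim (v ∘ Sum.inl) (v ∘ Sum.inr) = v := by
      funext j; cases j <;> rfl
    calc M.mulVec v = M.mulVec (Sum.elim (v ∘ Sum.inl) (v ∘ Sum.inr)) := by rw [hv]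
    _ = A.mulVec (v ∘ Sum.inl) + (1 : Matrix (Fin m) (Fin m) ℝ).mulVec (v ∘ Sum.inr) :=
        Matrix.fromCols_mulVec_sumElim A _ _ _
    _ = A.mulVec (v ∘ Sum.inl) + (v ∘ Sum.inr) := by rw [Matrix.one_mulVec]
  -- the basic solution satisfies M x' = b
  have hx'b : x' ∘ β = B⁻¹.mulVec b := funext hx'B
  have hx'n : x' ∘ ν = 0 := funext hx'N
  have hMx' : M.mulVec x' = b := by
    rw [hMsplit, hx'b, hx'n, Matrix.mulVec_zero, add_zero, Matrix.mulVec_mulVec,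
      Matrix.mul_nonsing_inv B hBdet, Matrix.one_mulVec]
  -- nonnegativity of x'
  have hx'nonneg : ∀ j, 0 ≤ x' j := by
    intro j
    obtain ⟨i, hi⟩ := hβν.surjective j
    cases i with
    | inl k =>
      have : x' (β k) = B⁻¹.mulVec b k := hx'B k
      rw [← hi]; simp only [Sum.elim_inl]; rw [this]; exact hfeas k
    | inr j' => rw [← hi]; simp [hx'N j']
  have hxX : x ∈ X := by
    rw [hX, hx]
    constructor
    · intro i
      have h1 := congrFun (hMlr x') i
      rw [hMx'] at h1
      have h2 : 0 ≤ x' (Sum.inr i) := hx'nonneg _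
      simp only [Pi.add_apply, Function.comp_apply] at h1
      show A.mulVec (x' ∘ Sum.inl) i ≤ b i
      linarith
    · intro i; exact hx'nonneg _
  -- objective values through S
  have hSw_inl : ∀ i, S.mulVec w (Sum.inl i) = P.mulVec w i := by
    intro i; simp [hS, Matrix.mulVec, Matrix.fromRows, Sum.elim_inl]; rfl
  have hSw_inr : ∀ i, S.mulVec w (Sum.inr i) = 0 := by
    intro i; simp [hS, Matrix.mulVec, Matrix.fromRows, dotProduct, Sum.elim_inr]
    exact Finset.sum_eq_zero fun j _ => zero_mul (w j)
  have hPBw : ∀ k, PB.mulVec w k = S.mulVec w (β k) := by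
    intro k; rw [hPB]; simp [Matrix.mulVec, Matrix.submatrix]
  have hPNw : ∀ k, PN.mulVec w k = S.mulVec w (ν k) := by
    intro k; rw [hPN]; simp [Matrix.mulVec, Matrix.submatrix]
  -- key: value of objective on any v with M v = b
  have hobj : ∀ v : Fin n ⊕ Fin m → ℝ, M.mulVec v = b →
      (P.mulVec w) ⬝ᵥ (v ∘ Sum.inl)
        = (PB.mulVec w) ⬝ᵥ (B⁻¹.mulVec b) - (ZN.mulVec w) ⬝ᵥ (v ∘ ν) := by
    intro v hv
    have hvβ : v ∘ β = B⁻¹.mulVec b - (B⁻¹ * N).mulVec (v ∘ ν) := by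
      have h1 : B.mulVec (v ∘ β) + N.mulVec (v ∘ ν) = b := by rw [← hMsplit, hv]
      have h2 : B⁻¹.mulVec (B.mulVec (v ∘ β) + N.mulVec (v ∘ ν)) = B⁻¹.mulVec b := by
        rw [h1]
      rw [Matrix.mulVec_add, Matrix.mulVec_mulVec, Matrix.mulVec_mulVec,
        Matrix.nonsing_inv_mul B hBdet, Matrix.one_mulVec] at h2
      rw [← h2]; abel
    have hsplitobj : (P.mulVec w) ⬝ᵥ (v ∘ Sum.inl)
        = (PB.mulVec w) ⬝ᵥ (v ∘ β) + (PN.mulVec w) ⬝ᵥ (v ∘ ν) := by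
      have h0 : (P.mulVec w) ⬝ᵥ (v ∘ Sum.inl) = ∑ j, S.mulVec w j * v j := by
        rw [Fintype.sum_sum_type]
        have : ∀ i : Fin m, S.mulVec w (Sum.inr i) * v (Sum.inr i) = 0 := by
          intro i; rw [hSw_inr]; ring
        simp only [this, Finset.sum_const_zero, add_zero]
        simp [dotProduct, hSw_inl]
      rw [h0, hsum (fun j => S.mulVec w j * v j)]
      congr 1
      · simp [dotProduct, hPBw]
      · simp [dotProduct, hPNw]
    rw [hsplitobj, hvβ, dotProduct_sub]
    have hZNw : ZN.mulVec w
        = (B⁻¹ * N).transpose.mulVec (PB.mulVec w) - PN.mulVec w := by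
      rw [hZN, Matrix.sub_mulVec, Matrix.mulVec_mulVec]
    have hdp : (PB.mulVec w) ⬝ᵥ ((B⁻¹ * N).mulVec (v ∘ ν))
        = ((B⁻¹ * N).transpose.mulVec (PB.mulVec w)) ⬝ᵥ (v ∘ ν) := by
      rw [Matrix.dotProduct_mulVec, Matrix.mulVec_transpose]
    rw [hdp, hZNw, sub_dotProduct]
    ring
  -- rewriting the objective
  have hobj_eq : ∀ z : Fin n → ℝ, w ⬝ᵥ P.transpose.mulVec z = (P.mulVec w) ⬝ᵥ z := by
    intro z
    rw [Matrix.dotProduct_mulVec, Matrix.vecMul_transpose]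
  -- optimality of x for P1(w)
  have hopt : ∀ z ∈ X, w ⬝ᵥ P.transpose.mulVec z ≤ w ⬝ᵥ P.transpose.mulVec x := by
    intro z hz
    rw [hX] at hz
    obtain ⟨hz1, hz2⟩ := hz
    set v : Fin n ⊕ Fin m → ℝ := Sum.elim z (b - A.mulVec z) with hvdef
    have hvb : M.mulVec v = b := by
      rw [show M.mulVec v = A.mulVec (v ∘ Sum.inl) + (v ∘ Sum.inr) from hMlr v]
      funext i
      have hz' : (Sum.elim z (b - A.mulVec z)) ∘ Sum.inl = z := rfl
      simp only [Pi.add_apply, Function.comp_apply, hvdef, Sum.elim_inl, Sum.elim_inr,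
        Pi.sub_apply, hz']
      ring
    have hvinl : v ∘ Sum.inl = z := by funext i; rfl
    have hvν_nonneg : 0 ≤ v ∘ ν := by
      intro j
      simp only [Function.comp_apply]
      cases hj : ν j with
      | inl i => simp [hvdef, hj]; exact hz2 i
      | inr i =>
        simp only [hvdef, hj, Sum.elim_inr, Pi.sub_apply]
        have := hz1 i
        simp only [Pi.zero_apply]
        linarith
    have hterm : 0 ≤ (ZN.mulVec w) ⬝ᵥ (v ∘ ν) := by
      apply Finset.sum_nonneg
      intro j _
      exact mul_nonneg (hZw j) (hvν_nonneg j)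
    have hxν : x' ∘ ν = 0 := hx'n
    have e1 := hobj v hvb
    have e2 := hobj x' hMx'
    rw [hvinl] at e1
    rw [hobj_eq z, hobj_eq x, e1, hx]
    have : (P.mulVec w) ⬝ᵥ (fun i => x' (Sum.inl i)) = (P.mulVec w) ⬝ᵥ (x' ∘ Sum.inl) := rfl
    rw [this, e2, hxν]
    simp only [dotProduct_zero, sub_zero]
    linarith
  refine ⟨hxX, hopt, ?_⟩
  -- strict positivity of w on C \ {0}
  have hwpos : ∀ c ∈ C, c ≠ 0 → 0 < w ⬝ᵥ c := by
    intro c hc hc0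
    obtain ⟨ε, hε, hball⟩ := Metric.mem_nhds_iff.mp (mem_interior_iff_mem_nhds.mp hw)
    have hcnorm : 0 < ‖c‖ := norm_pos_iff.mpr hc0
    set t : ℝ := ε / (2 * ‖c‖) with ht
    have htpos : 0 < t := div_pos hε (by positivity)
    have hmem : w - t • c ∈ Metric.ball w ε := by
      rw [Metric.mem_ball, dist_eq_norm]
      have : w - t • c - w = -(t • c) := by abel
      rw [this, norm_neg, norm_smul, Real.norm_eq_abs, abs_of_pos htpos]
      have ht2 : t * ‖c‖ = ε / 2 := by
        rw [ht]; field_simp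
      rw [ht2]; linarith
    have hw' : 0 ≤ (w - t • c) ⬝ᵥ c := hball hmem c hc
    rw [sub_dotProduct, smul_dotProduct] at hw'
    have hcc : 0 < c ⬝ᵥ c := by
      have hnn : 0 ≤ c ⬝ᵥ c := Finset.sum_nonneg fun i _ => mul_self_nonneg _
      rcases lt_or_eq_of_le hnn with h | h
      · exact h
      · exact absurd (dotProduct_self_eq_zero.mp h.symm) hc0
    have : t * (c ⬝ᵥ c) ≤ w ⬝ᵥ c := by
      have := hw'
      simp only [smul_eq_mul] at this
      linarith
    nlinarith
  -- the maximizer property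
  rw [Set.eq_empty_iff_forall_notMem]
  rintro y ⟨hy1, hy2⟩
  obtain ⟨a, ha, c, hc, hac⟩ := Set.mem_add.mp hy1
  rw [Set.mem_singleton_iff] at ha
  obtain ⟨z, hzX, hzy⟩ := hy2
  obtain ⟨hcC, hc0⟩ := hc
  rw [Set.mem_singleton_iff] at hc0
  have hpos : 0 < w ⬝ᵥ c := hwpos c hcC hc0
  have h1 : w ⬝ᵥ y = w ⬝ᵥ P.transpose.mulVec x + w ⬝ᵥ c := by
    rw [← hac, ha, dotProduct_add]
  have h2 : w ⬝ᵥ y = w ⬝ᵥ P.transpose.mulVec z := by rw [← hzy]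
  have h3 := hopt z hzX
  linarith
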